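/- arXiv:1702.05141 — 2 statements merged into one kernel-verified Lean document; each statement's English description precedes it below -/
import Mathlib

section
/- Let M be a loopless matroid on a finite nonempty ground set E and let x ∈ ℝ^E. If u, w ∈ C(x) and λ, μ ∈ ℝ satisfy max(λ,μ) = 0, then the vector e ↦ max(λ + u(e), μ + w(e)) belongs to C(x); i.e., the set of M-ultrametrics l∞-nearest to x is tropically convex. -/
variable {α : Type*}

/-- The weight of a set `B` with respect to `w`. -/
noncomputable def bweight (w : α → ℝ) (B : Set α) : ℝ := ∑ᶠ e ∈ B, w e

/-- `B` is a `w`-minimum basis of `M`. -/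
def MinBase (M : Matroid α) (w : α → ℝ) (B : Set α) : Prop :=
  M.IsBase B ∧ ∀ B', M.IsBase B' → bweight w B ≤ bweight w B'

/-- `w` is an `M`-ultrametric: every ground element lies in some `w`-minimum basis. -/
def MUltrametric (M : Matroid α) (w : α → ℝ) : Prop :=
  ∀ e ∈ M.E, ∃ B, MinBase M w B ∧ e ∈ B

/-- The `l∞`-distance `‖x - y‖∞ = max_e |x e - y e|`. -/
noncomputable def linf [Fintype α] [Nonempty α] (x y : α → ℝ) : ℝ :=
  Finset.univ.sup' Finset.univ_nonempty fun e => |x e - y e|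

/-- `C(x)`: the set of `M`-ultrametrics that are `l∞`-nearest to `x`. -/
def CSet [Fintype α] [Nonempty α] (M : Matroid α) (x : α → ℝ) : Set (α → ℝ) :=
  {w | MUltrametric M w ∧ ∀ u, MUltrametric M u → linf x w ≤ linf x u}

/-- The tropical convex hull of a nonempty finite set `V ⊆ ℝ^E`. -/
def tconv (V : Finset (α → ℝ)) (hV : V.Nonempty) : Set (α → ℝ) :=
  {w | ∃ lam : (α → ℝ) → ℝ, V.sup' hV lam = 0 ∧
    ∀ e, w e = V.sup' hV fun v => lam v + v e}

open Set

lemma bweight_toFinset [Fintype α] (w : α → ℝ) (S : Set α) :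
    bweight w S = ∑ x ∈ (Set.toFinite S).toFinset, w x := by
  rw [bweight, ← finsum_mem_coe_finset, Set.Finite.coe_toFinset]

lemma bweight_exchange [Fintype α] (w : α → ℝ) {B : Set α} {e f : α}
    (he : e ∉ B) (hf : f ∈ B) :
    bweight w (insert e (B \ {f})) = bweight w B + w e - w f := by
  classical
  rw [bweight_toFinset, bweight_toFinset]
  have h1 : (Set.toFinite (insert e (B \ {f}))).toFinset
      = insert e ((Set.toFinite B).toFinset.erase f) := by
    ext x
    simp only [Set.Finite.mem_toFinset, Finset.mem_insert, Finset.mem_erase,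
      Set.mem_insert_iff, Set.mem_diff, Set.mem_singleton_iff]
    tauto
  rw [h1, Finset.sum_insert (by simp only [Finset.mem_erase, Set.Finite.mem_toFinset]; tauto),
    Finset.sum_erase_eq_sub (by simpa [Set.Finite.mem_toFinset] using hf)]
  ring

lemma exists_minBase [Fintype α] (M : Matroid α) (w : α → ℝ) : ∃ B, MinBase M w B := by
  have hfin : {B | M.IsBase B}.Finite := Set.toFinite _
  obtain ⟨B, hB⟩ := M.exists_isBase
  obtain ⟨B₀, hB₀, hmin⟩ := Set.Finite.exists_minimalFor (bweight w) _ hfin ⟨B, hB⟩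
  refine ⟨B₀, hB₀, fun B' hB' => ?_⟩
  rcases le_total (bweight w B₀) (bweight w B') with h | h
  · exact h
  · exact hmin hB' h

lemma mem_closure_exchange {M : Matroid α} {B : Set α} (hB : M.IsBase B) {e : α}
    (he : e ∈ M.E) (heB : e ∉ B) :
    e ∈ M.closure {f ∈ B | e ∉ M.closure (B \ {f})} := by
  set K := {f ∈ B | e ∈ M.closure (B \ {f})} with hK
  have hSK : {f ∈ B | e ∉ M.closure (B \ {f})} = B \ K := by
    ext x; simp only [hK, Set.mem_setOf_eq, Set.mem_diff]; tauto
  rw [hSK]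
  rcases K.eq_empty_or_nonempty with h | hKne
  · rw [h, diff_empty, hB.closure_eq]; exact he
  · have hBK : B \ K = ⋂ f ∈ K, (B \ {f}) := by
      ext x
      simp only [Set.mem_diff, Set.mem_iInter, Set.mem_singleton_iff]
      constructor
      · rintro ⟨hxB, hxK⟩ f hf
        exact ⟨hxB, fun h => hxK (h ▸ hf)⟩
      · intro h
        obtain ⟨f0, hf0⟩ := hKne
        exact ⟨(h f0 hf0).1, fun hxK => (h x hxK).2 rfl⟩
    have hcleq := Matroid.closure_biInter_eq_biInter_closure_of_biUnion_indep
      (I := fun f => B \ {f}) hKne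
      (hB.indep.subset (Set.iUnion₂_subset fun f _ => diff_subset))
    rw [hBK, hcleq]
    exact Set.mem_iInter₂.2 fun f hf => hf.2

lemma minBase_no_drop [Fintype α] {M : Matroid α} {v : α → ℝ} {e : α} {B₀ : Set α}
    (hB₀ : MinBase M v B₀) (heB : e ∈ B₀) {S : Set α} (hSE : S ⊆ M.E)
    (hScl : e ∈ M.closure S) (hSlt : ∀ f ∈ S, v f < v e) : False := by
  have hind : M.Indep (B₀ \ {e}) := hB₀.1.indep.subset diff_subset
  have hecl : e ∉ M.closure (B₀ \ {e}) := hB₀.1.indep.notMem_closure_diff_of_mem heB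
  have hSncl : ¬ S ⊆ M.closure (B₀ \ {e}) := fun hsub =>
    hecl ((M.closure_subset_closure_of_subset_closure hsub) hScl)
  obtain ⟨f, hfS, hfcl⟩ := Set.not_subset.1 hSncl
  have hfE : f ∈ M.E := hSE hfS
  have hfind : M.Indep (insert f (B₀ \ {e})) := ((hind.notMem_closure_iff hfE).1 hfcl).1
  have hfB : f ∉ B₀ := by
    intro hfB₀
    have hfe : f ≠ e := by
      intro h
      exact absurd (hSlt f hfS) (by rw [h]; exact lt_irrefl _)
    exact hfcl (M.mem_closure_of_mem' ⟨hfB₀, hfe⟩ hfE)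
  have hbase : M.IsBase (insert f (B₀ \ {e})) := hB₀.1.exchange_isBase_of_indep hfB hfind
  have hmin := hB₀.2 _ hbase
  rw [bweight_exchange v hfB heB] at hmin
  have := hSlt f hfS
  linarith

lemma ultram_max [Fintype α] {M : Matroid α} (hE : M.E = Set.univ)
    {u w : α → ℝ} (hu : MUltrametric M u) (hw : MUltrametric M w) (lam mu : ℝ) :
    MUltrametric M (fun e => max (lam + u e) (mu + w e)) := by
  intro e heE
  set v : α → ℝ := fun e => max (lam + u e) (mu + w e) with hv
  obtain ⟨B, hBmin⟩ := exists_minBase M v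
  by_cases heB : e ∈ B
  · exact ⟨B, hBmin, heB⟩
  have hScl : e ∈ M.closure {f ∈ B | e ∉ M.closure (B \ {f})} :=
    mem_closure_exchange hBmin.1 heE heB
  by_cases hex : ∃ f ∈ {f ∈ B | e ∉ M.closure (B \ {f})}, v e ≤ v f
  · obtain ⟨f, hfS, hvf⟩ := hex
    have hfB : f ∈ B := hfS.1
    have hind : M.Indep (insert e (B \ {f})) :=
      (((hBmin.1.indep.subset diff_subset).notMem_closure_iff heE).1 hfS.2).1
    have hbase : M.IsBase (insert e (B \ {f})) := hBmin.1.exchange_isBase_of_indep heB hind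
    refine ⟨_, ⟨hbase, fun B' hB' => ?_⟩, Set.mem_insert _ _⟩
    have := hBmin.2 B' hB'
    rw [bweight_exchange v heB hfB]
    linarith
  · push_neg at hex
    exfalso
    rcases le_total (mu + w e) (lam + u e) with hcase | hcase
    · obtain ⟨B₀, hB₀, heB₀⟩ := hu e heE
      refine minBase_no_drop hB₀ heB₀ (by rw [hE]; exact Set.subset_univ _) hScl ?_
      intro f hfS
      have h1 : lam + u f ≤ v f := le_max_left _ _
      have h2 : v f < v e := hex f hfS
      have h3 : v e = lam + u e := max_eq_left hcase
      linarith
    · obtain ⟨B₀, hB₀, heB₀⟩ := hw e heE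
      refine minBase_no_drop hB₀ heB₀ (by rw [hE]; exact Set.subset_univ _) hScl ?_
      intro f hfS
      have h1 : mu + w f ≤ v f := le_max_right _ _
      have h2 : v f < v e := hex f hfS
      have h3 : v e = mu + w e := max_eq_right hcase
      linarith

/-- The set of `M`-ultrametrics `l∞`-nearest to `x` is tropically convex. -/
theorem stmt11 [Fintype α] [Nonempty α] (M : Matroid α) (hE : M.E = Set.univ)
    (hloop : ∀ e, M.Indep {e}) (x : α → ℝ) (u w : α → ℝ)
    (hu : u ∈ CSet M x) (hw : w ∈ CSet M x) (lam mu : ℝ) (hlm : max lam mu = 0) :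
    (fun e => max (lam + u e) (mu + w e)) ∈ CSet M x := by
  obtain ⟨huU, huN⟩ := hu
  obtain ⟨hwU, hwN⟩ := hw
  have hlam : lam ≤ 0 := hlm ▸ le_max_left lam mu
  have hmu : mu ≤ 0 := hlm ▸ le_max_right lam mu
  have hl0 : lam = 0 ∨ mu = 0 := by
    rcases max_choice lam mu with h | h
    · exact Or.inl (by rw [← h, hlm])
    · exact Or.inr (by rw [← h, hlm])
  have hwu : linf x w ≤ linf x u := hwN u huU
  refine ⟨ultram_max hE huU hwU lam mu, fun u' hu' => ?_⟩
  have hmain : linf x (fun e => max (lam + u e) (mu + w e)) ≤ linf x u := by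
    apply Finset.sup'_le
    intro e _
    show |x e - max (lam + u e) (mu + w e)| ≤ linf x u
    have hxu : |x e - u e| ≤ linf x u :=
      Finset.le_sup' (fun e => |x e - u e|) (Finset.mem_univ e)
    have hxw : |x e - w e| ≤ linf x w :=
      Finset.le_sup' (fun e => |x e - w e|) (Finset.mem_univ e)
    rw [abs_le] at hxu hxw ⊢
    constructor
    · have h1 : max (lam + u e) (mu + w e) ≤ max (u e) (w e) :=
        max_le_max (by linarith) (by linarith)
      have h2 : max (u e) (w e) ≤ x e + linf x u :=
        max_le (by linarith [hxu.1]) (by linarith [hxw.1, hwu])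
      linarith
    · rcases hl0 with h | h
      · have : u e ≤ max (lam + u e) (mu + w e) := by
          rw [h] at *; simpa using le_max_left (0 + u e) (mu + w e)
        linarith [hxu.2]
      · have : w e ≤ max (lam + u e) (mu + w e) := by
          rw [h] at *; simpa using le_max_right (lam + u e) (0 + w e)
        linarith [hxw.2, hwu]
  exact hmain.trans (huN u' hu')
end

section
/- Let M be a loopless matroid on a finite nonempty ground set E, let x ∈ ℝ^E, and suppose x^m ∈ C(x) satisfies w(e) ≤ x^m(e) for all w ∈ C(x) and all e ∈ E. Define S₀ = {x^m}, and for i ≥ 1 let S_i be the set of all M-ultrametrics obtained from some w ∈ S_{i−1} by sliding a mobile member of some resolution of T(w) all the way down. Then the union ⋃_{i≥0} S_i is a finite set. -/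
variable {α : Type*}

/-- A circuit of `M`: a dependent subset of the ground set all of whose proper
subsets are independent. -/
def MCircuit (M : Matroid α) (C : Set α) : Prop :=
  C ⊆ M.E ∧ ¬ M.Indep C ∧ ∀ D : Set α, D ⊂ C → M.Indep D

/-- A matroid is connected if its ground set is nonempty and any two distinct
elements of the ground set lie in a common circuit. -/
def MConnected (M : Matroid α) : Prop :=
  M.E.Nonempty ∧ ∀ a ∈ M.E, ∀ b ∈ M.E, a ≠ b → ∃ C, MCircuit M C ∧ a ∈ C ∧ b ∈ C

/-- The connected component of `e` in `M`: the equivalence class of `e` under the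
relation "lying in a common circuit". -/
def MComponent (M : Matroid α) (e : α) : Set α :=
  {f ∈ M.E | f = e ∨ ∃ C, MCircuit M C ∧ e ∈ C ∧ f ∈ C}

/-- A nested set of `M`: a collection of nonempty connected flats containing every
connected component of `M`, such that the closure of the union of any ≥ 2 pairwise
incomparable members induces a disconnected restriction. -/
def NestedSet (M : Matroid α) (S : Set (Set α)) : Prop :=
  (∀ F ∈ S, F.Nonempty ∧ M.IsFlat F ∧ MConnected (M.restrict F)) ∧
  (∀ e ∈ M.E, MComponent M e ∈ S) ∧
  (∀ T : Finset (Set α), ↑T ⊆ S → 2 ≤ T.card →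
    (∀ F ∈ T, ∀ G ∈ T, F ≠ G → ¬ F ⊆ G ∧ ¬ G ⊆ F) →
    ¬ MConnected (M.restrict (M.closure (⋃ F ∈ T, F))))

/-- `a : S → ℝ` is compatible with `S`: weakly monotone with respect to inclusion. -/
def Compat (S : Set (Set α)) (a : Set α → ℝ) : Prop :=
  ∀ F ∈ S, ∀ G ∈ S, F ⊆ G → a F ≤ a G

/-- `a : S → ℝ` is strictly compatible with `S`. -/
def StrictCompat (S : Set (Set α)) (a : Set α → ℝ) : Prop :=
  ∀ F ∈ S, ∀ G ∈ S, F ⊂ G → a F < a G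

/-- `F` is the minimal member of `S` containing `e`. -/
def MinMem (S : Set (Set α)) (e : α) (F : Set α) : Prop :=
  F ∈ S ∧ e ∈ F ∧ ∀ G ∈ S, e ∈ G → F ⊆ G

/-- `w` is the vector `w^{S,a}`, i.e. `w e = a (F_e)` where `F_e` is the minimal
member of `S` containing `e`, for every `e` in the ground set. -/
def Represents (M : Matroid α) (S : Set (Set α)) (a : Set α → ℝ) (w : α → ℝ) : Prop :=
  ∀ e ∈ M.E, ∃ F, MinMem S e F ∧ w e = a F

/-- `S` is the topology `T(w)` of the `M`-ultrametric `w`: the unique nested set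
admitting a strictly compatible weighting representing `w`. -/
def IsTopologyOf (M : Matroid α) (w : α → ℝ) (S : Set (Set α)) : Prop :=
  NestedSet M S ∧ ∃ a, StrictCompat S a ∧ Represents M S a w

/-- The rank of a set in a matroid: the largest cardinality of an independent subset. -/
noncomputable def mrank (M : Matroid α) (X : Set α) : ℕ :=
  sSup {n | ∃ I, I ⊆ X ∧ M.Indep I ∧ I.ncard = n}

/-- A polytomy of a nested set `S`: a member `F` with
`r(F) - r(⋃{G ∈ S : G ⊊ F}) ≥ 2`. -/
def Polytomy (M : Matroid α) (S : Set (Set α)) (F : Set α) : Prop :=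
  F ∈ S ∧ mrank M (⋃₀ {G | G ∈ S ∧ G ⊂ F}) + 2 ≤ mrank M F

/-- A resolution of a nested set `S`: a nested set containing `S` with no polytomies. -/
def MResolution (M : Matroid α) (S S' : Set (Set α)) : Prop :=
  NestedSet M S' ∧ S ⊆ S' ∧ ∀ F ∈ S', ¬ Polytomy M S' F

open scoped Classical in
/-- The weighting obtained from `a` by changing its value at `F` to `t`. -/
noncomputable def updF (a : Set α → ℝ) (F : Set α) (t : ℝ) : Set α → ℝ :=
  fun G => if G = F then t else a G

/-- `F ∈ S` is mobile for `w = w^{S,a} ∈ C(x)`: its weight can be strictly decreased,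
keeping compatibility, so that the resulting vector is still in `C(x)`. -/
def Mobile [Fintype α] [Nonempty α] (M : Matroid α) (x : α → ℝ) (S : Set (Set α))
    (a : Set α → ℝ) (w : α → ℝ) (F : Set α) : Prop :=
  F ∈ S ∧ ∃ t < a F, Compat S (updF a F t) ∧
    ∃ w', Represents M S (updF a F t) w' ∧ w' ≠ w ∧ w' ∈ CSet M x

/-- `w'` is obtained from `w = w^{S,a}` by sliding the mobile flat `F` all the way
down: the new weight `t` of `F` is either the maximum weight of the members of `S`
properly contained in `F`, or the least value keeping the result in `C(x)`. -/
def SlideTo [Fintype α] [Nonempty α] (M : Matroid α) (x : α → ℝ) (S : Set (Set α))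
    (a : Set α → ℝ) (w : α → ℝ) (F : Set α) (w' : α → ℝ) : Prop :=
  F ∈ S ∧ ∃ t < a F, Compat S (updF a F t) ∧ Represents M S (updF a F t) w' ∧
    w' ≠ w ∧ w' ∈ CSet M x ∧
    (IsGreatest {r | ∃ G, G ∈ S ∧ G ⊂ F ∧ r = a G} t ∨
      IsLeast {s | Compat S (updF a F s) ∧
        ∃ w'', Represents M S (updF a F s) w'' ∧ w'' ∈ CSet M x} t)

/-- `w'` is obtained from `w` by sliding some mobile member of some resolution of
`T(w)` all the way down. -/
def SlideStep [Fintype α] [Nonempty α] (M : Matroid α) (x : α → ℝ) (w w' : α → ℝ) :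
    Prop :=
  ∃ (T S : Set (Set α)) (a : Set α → ℝ) (F : Set α),
    IsTopologyOf M w T ∧ MResolution M T S ∧ Compat S a ∧
    Represents M S a w ∧ SlideTo M x S a w F w'

/-- The sequence `S₀ = {x^m}`, `S_{i+1} = ` vectors obtained from members of `S_i`
by sliding a mobile flat all the way down. -/
def Sseq [Fintype α] [Nonempty α] (M : Matroid α) (x xm : α → ℝ) : ℕ → Set (α → ℝ)
  | 0 => {xm}
  | i + 1 => {w' | ∃ w ∈ Sseq M x xm i, SlideStep M x w w'}

/-- `v` is a tropical vertex of `C(x)`. -/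
def TropVertex [Fintype α] [Nonempty α] (M : Matroid α) (x v : α → ℝ) : Prop :=
  v ∈ CSet M x ∧ ∀ u ∈ CSet M x, ∀ w ∈ CSet M x, ∀ lam mu : ℝ, max lam mu = 0 →
    (∀ e, v e = max (lam + u e) (mu + w e)) → v = u ∨ v = w


/-! ### Auxiliary lemmas -/

section AuxLemmas

open Set

variable {M : Matroid α}

lemma bweight_eq_sum (w : α → ℝ) {B : Set α} (hB : B.Finite) :
    bweight w B = ∑ e ∈ hB.toFinset, w e := by
  rw [bweight, ← finsum_mem_coe_finset, Set.Finite.coe_toFinset]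

lemma bweight_insert [DecidableEq α] (w : α → ℝ) {K : Set α} (hK : K.Finite) {y : α}
    (hy : y ∉ K) : bweight w (insert y K) = w y + bweight w K := by
  rw [bweight_eq_sum w (hK.insert y), bweight_eq_sum w hK, Set.Finite.toFinset_insert,
    Finset.sum_insert (by simpa using hy)]

/-- If `s'` has pointwise smaller sublevel counts than `s` (and the same cardinality),
then the `w`-sum over `s` is at most that over `s'`. -/
lemma sum_le_of_counts [DecidableEq α] (w : α → ℝ) (s s' : Finset α)
    (hcard : s.card = s'.card)
    (hcount : ∀ c : ℝ, (s'.filter fun e => w e ≤ c).card ≤ (s.filter fun e => w e ≤ c).card) :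
    ∑ e ∈ s, w e ≤ ∑ e ∈ s', w e := by
  classical
  induction s using Finset.strongInduction generalizing s' with
  | _ s ih =>
    rcases s.eq_empty_or_nonempty with rfl | hne
    · have hs' : s' = ∅ := Finset.card_eq_zero.mp (by simpa using hcard.symm)
      subst hs'; simp
    · have hne' : s'.Nonempty := Finset.card_pos.mp (hcard ▸ Finset.card_pos.mpr hne)
      obtain ⟨e₀, he₀, hmin₀⟩ := Finset.exists_min_image s w hne
      obtain ⟨e₁, he₁, hmin₁⟩ := Finset.exists_min_image s' w hne'
      have hw01 : w e₀ ≤ w e₁ := by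
        have h1 : 0 < ((s'.filter fun e => w e ≤ w e₁).card) :=
          Finset.card_pos.mpr ⟨e₁, Finset.mem_filter.mpr ⟨he₁, le_refl _⟩⟩
        have h2 : 0 < ((s.filter fun e => w e ≤ w e₁).card) :=
          lt_of_lt_of_le h1 (hcount (w e₁))
        obtain ⟨e, he⟩ := Finset.card_pos.mp h2
        obtain ⟨hes, hew⟩ := Finset.mem_filter.mp he
        exact le_trans (hmin₀ e hes) hew
      have hcard' : (s.erase e₀).card = (s'.erase e₁).card := by
        rw [Finset.card_erase_of_mem he₀, Finset.card_erase_of_mem he₁, hcard]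
      have hcount' : ∀ c : ℝ, ((s'.erase e₁).filter fun e => w e ≤ c).card ≤
          ((s.erase e₀).filter fun e => w e ≤ c).card := by
        intro c
        by_cases hc1 : w e₁ ≤ c
        · have hc0 : w e₀ ≤ c := hw01.trans hc1
          rw [Finset.filter_erase, Finset.filter_erase,
            Finset.card_erase_of_mem (Finset.mem_filter.mpr ⟨he₁, hc1⟩),
            Finset.card_erase_of_mem (Finset.mem_filter.mpr ⟨he₀, hc0⟩)]
          exact Nat.sub_le_sub_right (hcount c) 1
        · have hz : ((s'.erase e₁).filter fun e => w e ≤ c) = ∅ := by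
            rw [Finset.filter_eq_empty_iff]
            intro e he' hle
            exact hc1 (le_trans (hmin₁ e (Finset.mem_of_mem_erase he')) hle)
          rw [hz]; exact Nat.zero_le _
      have key := ih (s.erase e₀) (Finset.erase_ssubset he₀) (s'.erase e₁) hcard' hcount'
      calc ∑ e ∈ s, w e = w e₀ + ∑ e ∈ s.erase e₀, w e :=
            (Finset.add_sum_erase s w he₀).symm
        _ ≤ w e₁ + ∑ e ∈ s'.erase e₁, w e := add_le_add hw01 key
        _ = ∑ e ∈ s', w e := Finset.add_sum_erase s' w he₁

lemma indep_ncard_le {I J : Set α} (hI : M.Indep I) (hJ : M.Indep J)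
    (hsub : I ⊆ M.closure J) (hfin : ∀ K : Set α, K.Finite) :
    I.ncard ≤ J.ncard := by
  obtain ⟨J', hJ'b, hIJ'⟩ := hI.subset_isBasis_of_subset hsub (M.closure_subset_ground J)
  have h1 : I.ncard ≤ J'.ncard := Set.ncard_le_ncard hIJ' (hfin J')
  have h2 : J'.encard = J.encard := hJ'b.encard_eq_encard hJ.isBasis_closure
  have h3 : J'.ncard = J.ncard := by rw [Set.ncard_def, h2, ← Set.ncard_def]
  omega

/-- A minimum-weight basis satisfies the threshold (span) condition. -/
lemma minBase_thresh [Fintype α] (hE : M.E = Set.univ) {w : α → ℝ} {B : Set α}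
    (h : MinBase M w B) (g e : α) (heg : w e ≤ w g) :
    e ∈ M.closure {f | f ∈ B ∧ w f ≤ w g} := by
  classical
  by_contra hecl
  set J : Set α := {f | f ∈ B ∧ w f ≤ w g} with hJdef
  have hJB : J ⊆ B := fun f hf => hf.1
  have hJi : M.Indep J := h.1.indep.subset hJB
  have heB : e ∉ B := fun heB =>
    hecl (M.subset_closure J (by rw [hE]; exact Set.subset_univ J) ⟨heB, heg⟩)
  have hins : M.Indep (insert e J) := by
    rw [hJi.insert_indep_iff]
    exact Or.inl ⟨by rw [hE]; trivial, hecl⟩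
  obtain ⟨B₂, hB₂, hsub₂, hsub₂'⟩ := hins.exists_isBase_subset_union_isBase h.1
  have hB₂sub : B₂ ⊆ insert e B := by
    refine hsub₂'.trans ?_
    rw [Set.insert_union]
    exact insert_subset_insert (Set.union_subset hJB subset_rfl)
  have heB₂ : e ∈ B₂ := hsub₂ (Set.mem_insert _ _)
  set K : Set α := B₂ \ {e} with hKdef
  have hKB : K ⊆ B := by
    intro f hf
    rcases hB₂sub hf.1 with h' | h'
    · exact absurd h' hf.2
    · exact h'
  have hKB₂ : insert e K = B₂ := by
    rw [hKdef, Set.insert_diff_singleton, Set.insert_eq_self.mpr heB₂]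
  have hcard : B₂.ncard = B.ncard := hB₂.ncard_eq_ncard_of_isBase h.1
  have heK : e ∉ K := fun h' => h'.2 rfl
  have hKcard : K.ncard = B₂.ncard - 1 := Set.ncard_diff_singleton_of_mem heB₂
  have hB₂pos : 1 ≤ B₂.ncard := by
    have : ({e} : Set α).ncard ≤ B₂.ncard :=
      Set.ncard_le_ncard (by simpa using heB₂) (Set.toFinite _)
    simpa using this
  have hBK : (B \ K).ncard = 1 := by
    rw [Set.ncard_diff hKB (Set.toFinite _), hKcard, hcard]
    omega
  obtain ⟨f, hf⟩ := Set.ncard_eq_one.mp hBK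
  have hfBK : f ∈ B \ K := hf ▸ Set.mem_singleton f
  have hfB : f ∈ B := hfBK.1
  have hfK : f ∉ K := hfBK.2
  have hfJ : f ∉ J := by
    intro hfJ
    exact hfK ⟨hsub₂ (Set.mem_insert_of_mem _ hfJ), fun h' => heB (h' ▸ hfB)⟩
  have hwf : w g < w f := lt_of_not_ge fun hle => hfJ ⟨hfB, hle⟩
  have hBeq : B = insert f K := by
    have h1 : K ∪ (B \ K) = B := Set.union_diff_cancel hKB
    rw [← h1, hf, Set.union_singleton]
  have hsum1 : bweight w B = w f + bweight w K := by
    rw [hBeq]; exact bweight_insert w (Set.toFinite K) hfK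
  have hsum2 : bweight w B₂ = w e + bweight w K := by
    rw [← hKB₂]; exact bweight_insert w (Set.toFinite K) heK
  have hle := h.2 B₂ hB₂
  rw [hsum1, hsum2] at hle
  have : w f ≤ w e := by linarith
  exact absurd (lt_of_le_of_lt heg hwf) (not_lt.mpr this)

/-- A basis satisfying the threshold condition is a minimum-weight basis. -/
lemma thresh_minBase [Fintype α] (hE : M.E = Set.univ) {w : α → ℝ} {B : Set α}
    (hB : M.IsBase B)
    (hth : ∀ g e : α, w e ≤ w g → e ∈ M.closure {f | f ∈ B ∧ w f ≤ w g}) :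
    MinBase M w B := by
  classical
  refine ⟨hB, fun B' hB' => ?_⟩
  rw [bweight_eq_sum w (Set.toFinite B), bweight_eq_sum w (Set.toFinite B')]
  apply sum_le_of_counts
  · rw [← Set.ncard_eq_toFinset_card _ (Set.toFinite B),
      ← Set.ncard_eq_toFinset_card _ (Set.toFinite B')]
    exact hB.ncard_eq_ncard_of_isBase hB'
  · intro c
    rcases ((Set.toFinite B').toFinset.filter fun e => w e ≤ c).eq_empty_or_nonempty with hemp | hnem
    · rw [hemp]; exact Nat.zero_le _
    · obtain ⟨g, hgmem, hgmax⟩ := Finset.exists_max_image _ w hnem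
      obtain ⟨hgB', hgc⟩ := Finset.mem_filter.mp hgmem
      have h1 : ((Set.toFinite B').toFinset.filter fun e => w e ≤ c) =
          ((Set.toFinite B').toFinset.filter fun e => w e ≤ w g) := by
        ext e
        simp only [Finset.mem_filter]
        constructor
        · rintro ⟨h1, h2⟩
          exact ⟨h1, hgmax e (Finset.mem_filter.mpr ⟨h1, h2⟩)⟩
        · rintro ⟨h1, h2⟩
          exact ⟨h1, h2.trans hgc⟩
      have hIset : (↑((Set.toFinite B').toFinset.filter fun e => w e ≤ w g) : Set α) =
          {f | f ∈ B' ∧ w f ≤ w g} := by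
        ext f; simp [Set.Finite.mem_toFinset]
      have hJset : (↑((Set.toFinite B).toFinset.filter fun e => w e ≤ w g) : Set α) =
          {f | f ∈ B ∧ w f ≤ w g} := by
        ext f; simp [Set.Finite.mem_toFinset]
      have hIi : M.Indep {f | f ∈ B' ∧ w f ≤ w g} :=
        hB'.indep.subset fun f hf => hf.1
      have hJi : M.Indep {f | f ∈ B ∧ w f ≤ w g} :=
        hB.indep.subset fun f hf => hf.1
      have hsub : {f | f ∈ B' ∧ w f ≤ w g} ⊆ M.closure {f | f ∈ B ∧ w f ≤ w g} :=
        fun f hf => hth g f hf.2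
      have hcard : ({f | f ∈ B' ∧ w f ≤ w g} : Set α).ncard ≤
          ({f | f ∈ B ∧ w f ≤ w g} : Set α).ncard :=
        indep_ncard_le hIi hJi hsub (fun K => Set.toFinite K)
      rw [← hIset, ← hJset] at hcard
      rw [Set.ncard_coe_finset, Set.ncard_coe_finset] at hcard
      calc ((Set.toFinite B').toFinset.filter fun e => w e ≤ c).card
          = ((Set.toFinite B').toFinset.filter fun e => w e ≤ w g).card := by rw [h1]
        _ ≤ ((Set.toFinite B).toFinset.filter fun e => w e ≤ w g).card := hcard
        _ ≤ ((Set.toFinite B).toFinset.filter fun e => w e ≤ c).card := by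
            apply Finset.card_le_card
            apply Finset.monotone_filter_right
            intro e _ he
            exact he.trans hgc

/-- Minimum-weight bases only depend on the weak order of the weights. -/
lemma ordEquiv_minBase [Fintype α] (hE : M.E = Set.univ) {w₁ w₂ : α → ℝ} {B : Set α}
    (h : ∀ p q : α, w₁ p ≤ w₁ q ↔ w₂ p ≤ w₂ q) (hm : MinBase M w₁ B) :
    MinBase M w₂ B := by
  apply thresh_minBase hE hm.1
  intro g e he
  have h2 : {f | f ∈ B ∧ w₂ f ≤ w₂ g} = {f | f ∈ B ∧ w₁ f ≤ w₁ g} := by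
    ext f
    simp only [Set.mem_setOf_eq, h f g]
  rw [h2]
  exact minBase_thresh hE hm g e ((h e g).mpr he)

lemma minmem_unique {S : Set (Set α)} {e : α} {F₁ F₂ : Set α}
    (h1 : MinMem S e F₁) (h2 : MinMem S e F₂) : F₁ = F₂ :=
  subset_antisymm (h1.2.2 _ h2.1 h2.2.1) (h2.2.2 _ h1.1 h1.2.1)

/-- Every member of a nested set is the minimal member containing some element. -/
lemma nested_exists_minmem [Fintype α] {S : Set (Set α)} {G : Set α}
    (hN : NestedSet M S) (hmin : ∀ e : α, ∃ H, MinMem S e H) (hG : G ∈ S) :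
    ∃ f, MinMem S f G := by
  classical
  by_contra hcon
  push_neg at hcon
  choose H hH using hmin
  have hHsub : ∀ e ∈ G, H e ⊆ G := fun e he => (hH e).2.2 G hG he
  have hHne : ∀ e ∈ G, H e ≠ G := by
    intro e he heq
    exact hcon e (heq ▸ hH e)
  set T₀ : Set (Set α) := (fun e => H e) '' G with hT₀def
  have hT₀S : T₀ ⊆ S := by
    rintro K ⟨e, _, rfl⟩
    exact (hH e).1
  set Tm : Set (Set α) := {K ∈ T₀ | ∀ K' ∈ T₀, K ⊆ K' → K = K'} with hTmdef
  have hup : ∀ K ∈ T₀, ∃ K' ∈ Tm, K ⊆ K' := by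
    intro K hK
    have hfin : ({K' ∈ T₀ | K ⊆ K'} : Set (Set α)).Finite := Set.toFinite _
    obtain ⟨K', hK', hmax⟩ : ∃ K' ∈ ({K' ∈ T₀ | K ⊆ K'} : Set (Set α)),
        ∀ K'' ∈ ({K' ∈ T₀ | K ⊆ K'} : Set (Set α)), K' ⊆ K'' → K' = K'' := by
      obtain ⟨K', hK'⟩ := hfin.exists_maximal ⟨K, hK, subset_rfl⟩
      exact ⟨K', hK'.1, fun K'' h1 h2 => subset_antisymm h2 (hK'.2 h1 h2)⟩
    refine ⟨K', ⟨hK'.1, ?_⟩, hK'.2⟩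
    intro K'' hK'' hsub
    exact hmax K'' ⟨hK'', hK'.2.trans hsub⟩ hsub
  have hGne : G.Nonempty := ((hN.1 G hG).1)
  by_cases hsing : ∀ K ∈ Tm, ∀ K' ∈ Tm, K = K'
  · obtain ⟨e₀, he₀⟩ := hGne
    obtain ⟨K₀, hK₀, _⟩ := hup (H e₀) ⟨e₀, he₀, rfl⟩
    have hGK₀ : G ⊆ K₀ := by
      intro e he
      obtain ⟨K', hK', hsub⟩ := hup (H e) ⟨e, he, rfl⟩
      have : K' = K₀ := hsing K' hK' K₀ hK₀
      exact this ▸ hsub (hH e).2.1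
    obtain ⟨e₁, he₁, hKe₁⟩ := hK₀.1
    have hKe₁' : H e₁ = K₀ := hKe₁
    refine hHne e₁ he₁ (subset_antisymm (hHsub e₁ he₁) ?_)
    rw [hKe₁']
    exact hGK₀
  · push_neg at hsing
    obtain ⟨K, hK, K', hK', hKK'⟩ := hsing
    set TF : Finset (Set α) := (Set.toFinite Tm).toFinset with hTFdef
    have hmemTF : ∀ L, L ∈ TF ↔ L ∈ Tm := fun L => Set.Finite.mem_toFinset _
    have hTFS : ↑TF ⊆ S := by
      intro L hL
      exact hT₀S ((hmemTF L).mp hL).1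
    have hTFcard : 2 ≤ TF.card := by
      rw [show (2 : ℕ) = 1 + 1 by rfl, Nat.add_one_le_iff]
      exact Finset.one_lt_card.mpr ⟨K, (hmemTF K).mpr hK, K', (hmemTF K').mpr hK', hKK'⟩
    have hTFinc : ∀ F ∈ TF, ∀ G' ∈ TF, F ≠ G' → ¬ F ⊆ G' ∧ ¬ G' ⊆ F := by
      intro F hF G' hG' hne
      have hF' := (hmemTF F).mp hF
      have hG'' := (hmemTF G').mp hG'
      exact ⟨fun hsub => hne (hF'.2 G' hG''.1 hsub),
        fun hsub => hne.symm (hG''.2 F hF'.1 hsub)⟩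
    have hdis := hN.2.2 TF hTFS hTFcard hTFinc
    have hunion : (⋃ F ∈ TF, F) = G := by
      apply subset_antisymm
      · apply Set.iUnion₂_subset
        intro L hL
        obtain ⟨e, he, hLe⟩ := ((hmemTF L).mp hL).1
        exact hLe ▸ hHsub e he
      · intro e he
        obtain ⟨K'', hK'', hsub⟩ := hup (H e) ⟨e, he, rfl⟩
        exact Set.mem_iUnion₂.mpr ⟨K'', (hmemTF K'').mpr hK'', hsub (hH e).2.1⟩
    rw [hunion, (hN.1 G hG).2.1.closure] at hdis
    exact hdis (hN.1 G hG).2.2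

end AuxLemmas

/-- Starting from the coordinatewise maximal element `x^m` of `C(x)` and repeatedly
sliding mobile flats of resolutions of topologies all the way down, only finitely many
`M`-ultrametrics are produced: `⋃ i, S_i` is finite. -/

theorem stmt14 [Fintype α] [Nonempty α] (M : Matroid α) (hE : M.E = Set.univ)
    (hloop : ∀ e, M.Indep {e}) (x xm : α → ℝ) (hxm : xm ∈ CSet M x)
    (hmax : ∀ w ∈ CSet M x, ∀ e, w e ≤ xm e) :
    (⋃ i, Sseq M x xm i).Finite := by
  classical
  set d : ℝ := linf x xm with hd
  set V : Set ℝ := Set.range xm ∪ Set.range (fun e => x e - d) with hV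
  have hVfin : V.Finite := (Set.finite_range _).union (Set.finite_range _)
  have hdle : ∀ u, MUltrametric M u → d ≤ linf x u := fun u hu => hxm.2 u hu
  have habs : ∀ u ∈ CSet M x, ∀ f : α, |x f - u f| ≤ d := by
    intro u hu f
    have h1 : |x f - u f| ≤ linf x u := by
      unfold linf
      exact Finset.le_sup' (fun e => |x e - u e|) (Finset.mem_univ f)
    exact le_trans h1 (hu.2 xm hxm.1)
  have key : ∀ i, ∀ w ∈ Sseq M x xm i, w ∈ CSet M x ∧ ∀ e, w e ∈ V := by
    intro i
    induction i with
    | zero =>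
      intro w hw
      rw [show Sseq M x xm 0 = {xm} from rfl, Set.mem_singleton_iff] at hw
      subst hw
      exact ⟨hxm, fun e => Or.inl ⟨e, rfl⟩⟩
    | succ i ih =>
      intro w' hw'
      obtain ⟨w, hw, hstep⟩ := hw'
      obtain ⟨hwC, hwV⟩ := ih w hw
      obtain ⟨T, S, a, F, htopo, hres, hca, hrw, hslide⟩ := hstep
      obtain ⟨hFS, t, hta, hct, hrw', hne', hw'C, hbr⟩ := hslide
      refine ⟨hw'C, ?_⟩
      have hminex : ∀ e : α, ∃ H, MinMem S e H := by
        intro e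
        obtain ⟨H, hH, -⟩ := hrw e (by rw [hE]; trivial)
        exact ⟨H, hH⟩
      have hwcoord : ∀ G ∈ S, ∃ f, w f = a G := by
        intro G hG
        obtain ⟨f, hf⟩ := nested_exists_minmem hres.1 hminex hG
        obtain ⟨G', hG', hG'eq⟩ := hrw f (by rw [hE]; trivial)
        rw [minmem_unique hG' hf] at hG'eq
        exact ⟨f, hG'eq⟩
      intro e
      obtain ⟨F', hF'min, hF'eq⟩ := hrw' e (by rw [hE]; trivial)
      by_cases hFF : F' = F
      · -- the new coordinate is `t`
        have hwt : w' e = t := by rw [hF'eq, hFF]; simp [updF]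
        rw [hwt]
        by_cases htg : ∃ G ∈ S, t = a G
        · obtain ⟨G, hGS, htG⟩ := htg
          obtain ⟨f, hf⟩ := hwcoord G hGS
          rw [htG, ← hf]
          exact hwV f
        · rcases hbr with hgr | hle
          · exact absurd (by obtain ⟨G, hGS, _, hGt⟩ := hgr.1; exact ⟨G, hGS, hGt⟩) htg
          · by_cases htx : ∃ e₀, t = x e₀ - d
            · obtain ⟨e₀, hte₀⟩ := htx
              rw [hV]
              exact Or.inr ⟨e₀, hte₀.symm⟩
            · exfalso
              push_neg at htg htx
              obtain ⟨hleastmem, hleastlb⟩ := hle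
              choose Fm hFm1 hFm2 using fun f : α => hrw' f (by rw [hE]; trivial)
              have hcoA : ∀ f, Fm f ≠ F → w' f = a (Fm f) := by
                intro f h; rw [hFm2 f]; simp [updF, h]
              have hcoF : ∀ f, Fm f = F → w' f = t := by
                intro f h; rw [hFm2 f, h]; simp [updF]
              have hFmS : ∀ f, Fm f ∈ S := fun f => (hFm1 f).1
              have hneq : ∀ f, Fm f ≠ F → w' f ≠ t := by
                intro f h
                rw [hcoA f h]
                exact fun hc => htg (Fm f) (hFmS f) hc.symm
              set Q : Finset ℝ :=
                (Finset.univ.image w') ∪ (Finset.univ.image fun f => x f - d) with hQ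
              have hw'Q : ∀ f, w' f ∈ Q := fun f =>
                Finset.mem_union_left _ (Finset.mem_image.mpr ⟨f, Finset.mem_univ f, rfl⟩)
              have hxdQ : ∀ f, x f - d ∈ Q := fun f =>
                Finset.mem_union_right _ (Finset.mem_image.mpr ⟨f, Finset.mem_univ f, rfl⟩)
              obtain ⟨s, hst, hsq⟩ : ∃ s, s < t ∧ ∀ q ∈ Q, q < t → q < s := by
                by_cases hQne : (Q.filter fun q => q < t).Nonempty
                · refine ⟨((Q.filter fun q => q < t).max' hQne + t) / 2, ?_, ?_⟩
                  · have h2 := (Finset.mem_filter.mp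
                      ((Q.filter fun q => q < t).max'_mem hQne)).2
                    linarith
                  · intro q hq hqt
                    have hqmem : q ∈ Q.filter fun r => r < t :=
                      Finset.mem_filter.mpr ⟨hq, hqt⟩
                    have h1 : q ≤ (Q.filter fun q => q < t).max' hQne :=
                      Finset.le_max' _ q hqmem
                    have h2 := (Finset.mem_filter.mp
                      ((Q.filter fun q => q < t).max'_mem hQne)).2
                    linarith
                · refine ⟨t - 1, by linarith, fun q hq hqt => absurd ?_ hQne⟩
                  exact Finset.filter_nonempty_iff.mpr ⟨q, hq, hqt⟩
              have haG : ∀ G ∈ S, G ≠ F → a G < t → a G < s := by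
                intro G hG hGF hlt
                obtain ⟨f, hf⟩ := nested_exists_minmem hres.1 hminex hG
                have hFmf : Fm f = G := minmem_unique (hFm1 f) hf
                have hwf : w' f = a G := by
                  rw [← hFmf]; exact hcoA f (by rw [hFmf]; exact hGF)
                rw [← hwf] at hlt ⊢
                exact hsq _ (hw'Q f) hlt
              set w3 : α → ℝ := fun f => if Fm f = F then s else w' f with hw3
              have hw3F : ∀ f, Fm f = F → w3 f = s := fun f h => by simp [hw3, h]
              have hw3nF : ∀ f, Fm f ≠ F → w3 f = w' f := fun f h => by simp [hw3, h]
              have hcmp : Compat S (updF a F s) := by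
                intro G hG H hH hGH
                have h1 := hct G hG H hH hGH
                by_cases hGF : G = F <;> by_cases hHF : H = F
                · rw [hGF, hHF]
                · rw [hGF] at h1 ⊢
                  simp [updF, hHF] at h1 ⊢
                  linarith
                · rw [hHF] at h1 ⊢
                  simp [updF, hGF] at h1 ⊢
                  have h2 : a G < t := lt_of_le_of_ne h1 fun hc => htg G hG hc.symm
                  exact le_of_lt (haG G hG hGF h2)
                · simp [updF, hGF, hHF] at h1 ⊢
                  exact h1
              have hrep3 : Represents M S (updF a F s) w3 := by
                intro f _
                refine ⟨Fm f, hFm1 f, ?_⟩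
                by_cases h : Fm f = F
                · rw [hw3F f h, h]; simp [updF]
                · rw [hw3nF f h, hcoA f h]; simp [updF, h]
              have heqv : ∀ p q : α, w' p ≤ w' q ↔ w3 p ≤ w3 q := by
                intro p q
                by_cases hp : Fm p = F <;> by_cases hq2 : Fm q = F
                · rw [hcoF p hp, hcoF q hq2, hw3F p hp, hw3F q hq2]
                  simp
                · rw [hcoF p hp, hw3F p hp, hw3nF q hq2]
                  constructor
                  · intro h
                    have h2 : t < w' q := lt_of_le_of_ne h (hneq q hq2).symm
                    linarith
                  · intro h
                    by_contra hcon
                    push_neg at hcon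
                    have := hsq _ (hw'Q q) hcon
                    linarith
                · rw [hcoF q hq2, hw3F q hq2, hw3nF p hp]
                  constructor
                  · intro h
                    have h2 : w' p < t := lt_of_le_of_ne h (hneq p hp)
                    exact le_of_lt (hsq _ (hw'Q p) h2)
                  · intro h
                    linarith
                · rw [hw3nF p hp, hw3nF q hq2]
              have hw3ultra : MUltrametric M w3 := by
                intro f hf
                obtain ⟨B, hB, hfB⟩ := hw'C.1 f hf
                exact ⟨B, ordEquiv_minBase hE heqv hB, hfB⟩
              have hw3d : linf x w3 ≤ d := by
                unfold linf
                apply Finset.sup'_le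
                intro f _
                by_cases h : Fm f = F
                · rw [hw3F f h]
                  have h1 := habs w' hw'C f
                  rw [hcoF f h] at h1
                  rw [abs_le] at h1 ⊢
                  have hxd : x f - d < t :=
                    lt_of_le_of_ne (by linarith [h1.2]) fun hc => htx f hc.symm
                  have hxd2 : x f - d < s := hsq _ (hxdQ f) hxd
                  constructor
                  · linarith [h1.1]
                  · linarith
                · rw [hw3nF f h]
                  exact habs w' hw'C f
              have hw3C : w3 ∈ CSet M x := ⟨hw3ultra, fun u hu => le_trans hw3d (hdle u hu)⟩
              have hts := hleastlb ⟨hcmp, w3, hrep3, hw3C⟩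
              linarith
      · have h1 : w' e = a F' := by rw [hF'eq]; simp [updF, hFF]
        obtain ⟨F'', hF''min, hF''eq⟩ := hrw e (by rw [hE]; trivial)
        rw [h1, ← minmem_unique hF''min hF'min, ← hF''eq]
        exact hwV e
  have hpi : {f : α → ℝ | ∀ e, f e ∈ V}.Finite := Set.Finite.pi' fun _ => hVfin
  refine hpi.subset ?_
  intro w hw
  obtain ⟨i, hwi⟩ := Set.mem_iUnion.mp hw
  exact (key i w hwi).2
end
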